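/- Let F be a number field with ring of integers O, fix an integer n ≥ 1 and positive integer weights w_1,…,w_n, and let A = (A_1,…,A_n) ∈ F^n be a point with not all A_i equal to zero. Then the set I(A) = {a ∈ F : a^{w_i}·A_i ∈ O for all i = 1,…,n} is the underlying set of a nonzero fractional ideal of F. -/

import Mathlib

open NumberField
open scoped nonZeroDivisors

private lemma mem_range_of_pow_mem {F : Type*} [Field F] [NumberField F] {x : F} {m : ℕ}
    (hm : 0 < m) (hx : x ^ m ∈ (algebraMap (𝓞 F) F).range) :
    x ∈ (algebraMap (𝓞 F) F).range := by
  obtain ⟨y, hy⟩ := hx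
  have hint : IsIntegral (𝓞 F) (x ^ m) := hy ▸ isIntegral_algebraMap
  have hx' : IsIntegral (𝓞 F) x := hint.of_pow hm
  obtain ⟨z, hz⟩ := IsIntegrallyClosed.isIntegral_iff.mp hx'
  exact ⟨z, hz⟩

/-- Let `F` be a number field with ring of integers `O`, fix `n ≥ 1` and
positive integer weights `w₁, …, wₙ`, and let `A ∈ Fⁿ` be a point with not all coordinates zero.
Then the set `{a ∈ F : a ^ wᵢ * Aᵢ ∈ O for all i}` is the underlying set of a nonzero
fractional ideal of `F`. -/
theorem weighted_projective_scaling_set_is_fractionalIdeal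
    (F : Type*) [Field F] [NumberField F]
    (n : ℕ) (hn : 1 ≤ n) (w : Fin n → ℕ+) (A : Fin n → F) (hA : ∃ i, A i ≠ 0) :
    ∃ J : FractionalIdeal (𝓞 F)⁰ F, J ≠ 0 ∧
      ((J : Submodule (𝓞 F) F) : Set F) =
        {a : F | ∀ i : Fin n, a ^ (w i : ℕ) * A i ∈ (algebraMap (𝓞 F) F).range} := by
  set R : Subring F := (algebraMap (𝓞 F) F).range with hR
  -- the key closure property
  have key : ∀ (a b : F), (∀ i, a ^ (w i : ℕ) * A i ∈ R) →
      (∀ i, b ^ (w i : ℕ) * A i ∈ R) → ∀ (i : Fin n) (k : ℕ), k ≤ (w i : ℕ) →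
      a ^ k * b ^ ((w i : ℕ) - k) * A i ∈ R := by
    intro a b ha hb i k hk
    obtain ⟨m, hm⟩ : ∃ m, (w i : ℕ) = k + m := ⟨(w i : ℕ) - k, (Nat.add_sub_cancel' hk).symm⟩
    have hsub : (w i : ℕ) - k = m := by omega
    rw [hsub]
    refine mem_range_of_pow_mem (m := (w i : ℕ)) (w i).2 ?_
    rw [hm]
    have : (a ^ k * b ^ m * A i) ^ (k + m) =
        (a ^ (k + m) * A i) ^ k * (b ^ (k + m) * A i) ^ m := by ring
    rw [this]
    exact mul_mem (pow_mem (hm ▸ ha i) k) (pow_mem (hm ▸ hb i) m)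
  -- the submodule
  set S : Submodule (𝓞 F) F :=
    { carrier := {a : F | ∀ i : Fin n, a ^ (w i : ℕ) * A i ∈ R}
      zero_mem' := by
        intro i
        rw [zero_pow (w i).pos.ne', zero_mul]
        exact zero_mem R
      add_mem' := by
        intro a b ha hb i
        rw [add_pow, Finset.sum_mul]
        apply sum_mem
        intro k hk
        have : a ^ k * b ^ ((w i : ℕ) - k) * ((w i : ℕ).choose k : F) * A i =
            (a ^ k * b ^ ((w i : ℕ) - k) * A i) * ((w i : ℕ).choose k : F) := by ring
        rw [this]
        exact mul_mem (key a b ha hb i k (Finset.mem_range_succ_iff.mp hk)) (natCast_mem R _)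
      smul_mem' := by
        intro c a ha i
        rw [Algebra.smul_def, mul_pow, mul_assoc, ← map_pow]
        exact mul_mem ⟨c ^ (w i : ℕ), rfl⟩ (ha i) } with hS
  -- S is fractional
  obtain ⟨i₀, hi₀⟩ := hA
  obtain ⟨p, q, hq, hpq⟩ := IsFractionRing.div_surjective (A := 𝓞 F) (A i₀)
  have hQ : algebraMap (𝓞 F) F q ≠ 0 := by
    simpa using nonZeroDivisors.ne_zero hq
  have hP : algebraMap (𝓞 F) F p = A i₀ * algebraMap (𝓞 F) F q := by
    field_simp at hpq
    rw [hpq, mul_comm]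
  have hp0 : p ≠ 0 := by
    intro h
    apply hi₀
    rw [h, map_zero] at hP
    exact (mul_eq_zero.mp hP.symm).resolve_right hQ
  have hfrac : IsFractional (𝓞 F)⁰ S := by
    refine ⟨p, mem_nonZeroDivisors_of_ne_zero hp0, ?_⟩
    intro b hb
    have hbmem : b ^ (w i₀ : ℕ) * A i₀ ∈ R := hb i₀
    obtain ⟨o, ho⟩ := hbmem
    obtain ⟨m, hm⟩ : ∃ m, (w i₀ : ℕ) = m + 1 :=
      ⟨(w i₀ : ℕ) - 1, (Nat.sub_add_cancel (w i₀).2).symm⟩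
    have hmem : algebraMap (𝓞 F) F p * b ∈ R := by
      apply mem_range_of_pow_mem (m := m + 1) (Nat.succ_pos m)
      have : (algebraMap (𝓞 F) F p * b) ^ (m + 1) =
          (algebraMap (𝓞 F) F p) ^ m * algebraMap (𝓞 F) F q *
            (b ^ (m + 1) * A i₀) := by
        rw [hP]; ring
      rw [this, ← hm, ← ho, ← map_pow, ← map_mul, ← map_mul]
      exact RingHom.mem_range.mpr ⟨_, rfl⟩
    obtain ⟨z, hz⟩ := hmem
    exact ⟨z, by rw [hz, Algebra.smul_def]⟩
  obtain ⟨d, hd⟩ := IsLocalization.exist_integer_multiples (𝓞 F)⁰ Finset.univ A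
  have hdS : (algebraMap (𝓞 F) F (d : 𝓞 F)) ∈ S := by
    intro i
    obtain ⟨m, hm⟩ : ∃ m, (w i : ℕ) = m + 1 :=
      ⟨(w i : ℕ) - 1, (Nat.sub_add_cancel (w i).2).symm⟩
    obtain ⟨o, ho⟩ := hd i (Finset.mem_univ i)
    rw [hm, pow_succ, mul_assoc]
    have hdR : algebraMap (𝓞 F) F (d : 𝓞 F) ∈ R := RingHom.mem_range.mpr ⟨_, rfl⟩
    refine mul_mem (pow_mem hdR m) (RingHom.mem_range.mpr ⟨o, ?_⟩)
    rw [ho, Algebra.smul_def]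
  have hd0 : (algebraMap (𝓞 F) F (d : 𝓞 F)) ≠ 0 := by
    simpa using nonZeroDivisors.ne_zero d.2
  refine ⟨⟨S, hfrac⟩, fun h => hd0 ?_, rfl⟩
  have hcoe : S = (⊥ : Submodule (𝓞 F) F) := by
    have := congrArg FractionalIdeal.coeToSubmodule h
    simpa using this
  exact (Submodule.mem_bot _).mp (hcoe ▸ hdS)
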